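/- Let n ≥ 2 and m ≥ 2 be integers, fix 1 ≤ i' < j' ≤ m, and set f = x_{i'} + x_{j'} ∈ R_m = ℤ[x_1, ..., x_m]. Then for all 1 ≤ i < j ≤ m, the integer c_{f^{2^n}}(x_i x_j)/2^n + c_{f^{2^n}}(x_i^{2^{n−1}} x_j^{2^{n−1}})/2 is odd if (i, j) = (i', j') and even otherwise. -/

import Mathlib

open MvPolynomial Finset in
private lemma expand_coeff' {m : ℕ} (a b : Fin m) (N : ℕ) (d : Fin m →₀ ℕ) :
    MvPolynomial.coeff d ((X a + X b : MvPolynomial (Fin m) ℤ) ^ N) =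
      ∑ k ∈ Finset.range (N + 1),
        if d = Finsupp.single a k + Finsupp.single b (N - k) then (N.choose k : ℤ) else 0 := by
  rw [add_pow, MvPolynomial.coeff_sum]
  refine Finset.sum_congr rfl fun k hk => ?_
  have : (X a : MvPolynomial (Fin m) ℤ) ^ k * X b ^ (N - k) * (N.choose k : MvPolynomial (Fin m) ℤ)
      = monomial (Finsupp.single a k + Finsupp.single b (N - k)) (N.choose k : ℤ) := by
    rw [X_pow_eq_monomial, X_pow_eq_monomial, monomial_mul, one_mul,
      ← C_eq_coe_nat, mul_comm, C_mul_monomial, mul_one]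
  rw [this, MvPolynomial.coeff_monomial]
  simp [eq_comm]

private lemma digits_sum_two_pow' (s : ℕ) : (Nat.digits 2 (2 ^ s)).sum = 1 := by
  induction s with
  | zero => simp
  | succ t ih =>
    have h1 : 2 ^ (t + 1) % 2 = 0 := by
      have : (2:ℕ) ∣ 2 ^ (t + 1) := dvd_pow_self 2 (Nat.succ_ne_zero t)
      omega
    have h2 : 2 ^ (t + 1) / 2 = 2 ^ t := by
      rw [pow_succ, Nat.mul_div_cancel _ (by norm_num)]
    rw [Nat.digits_def' (by norm_num : (1:ℕ) < 2) (by positivity), h1, h2, List.sum_cons, ih]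

private lemma odd_central' (n : ℕ) (hn : 1 ≤ n) :
    Odd (Nat.choose (2 ^ n) (2 ^ (n - 1)) / 2) := by
  have hk : 2 ^ (n - 1) ≤ 2 ^ n := Nat.pow_le_pow_right (by norm_num) (Nat.sub_le n 1)
  have hsub : 2 ^ n - 2 ^ (n - 1) = 2 ^ (n - 1) := by
    have : 2 ^ n = 2 ^ (n - 1) * 2 := by
      rw [← pow_succ]; congr 1; omega
    omega
  have hv : padicValNat 2 (Nat.choose (2 ^ n) (2 ^ (n - 1))) = 1 := by
    have := sub_one_mul_padicValNat_choose_eq_sub_sum_digits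
      (p := 2) (k := 2 ^ (n - 1)) (n := 2 ^ n) hk
    rw [hsub, digits_sum_two_pow', digits_sum_two_pow'] at this
    omega
  set C := Nat.choose (2 ^ n) (2 ^ (n - 1)) with hC
  have hC0 : C ≠ 0 := Nat.choose_pos hk |>.ne'
  have h2 : 2 ∣ C := by
    have := pow_padicValNat_dvd (p := 2) (n := C)
    rwa [hv, pow_one] at this
  rw [Nat.odd_iff]
  by_contra h
  have h4 : 2 ^ 2 ∣ C := by
    obtain ⟨q, hq⟩ := h2
    have : 2 ∣ q := by omega
    obtain ⟨r, hr⟩ := this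
    exact ⟨r, by omega⟩
  have := (padicValNat_dvd_iff_le hC0).mp h4
  omega

/-- For `f = x_{i'} + x_{j'}`, the integer
`c_{f^{2^n}}(x_i x_j)/2^n + c_{f^{2^n}}(x_i^{2^{n-1}} x_j^{2^{n-1}})/2`
is odd when `(i,j) = (i',j')` and even otherwise. -/
theorem stmt_12 (n m : ℕ) (hn : 2 ≤ n) (hm : 2 ≤ m) (i' j' : Fin m) (hij' : i' < j') :
    ∀ i j : Fin m, i < j →
      (((i, j) = (i', j') →
          Odd (MvPolynomial.coeff (Finsupp.single i 1 + Finsupp.single j 1)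
                ((MvPolynomial.X i' + MvPolynomial.X j' : MvPolynomial (Fin m) ℤ) ^ 2 ^ n) /
              2 ^ n +
            MvPolynomial.coeff
                (Finsupp.single i (2 ^ (n - 1)) + Finsupp.single j (2 ^ (n - 1)))
                ((MvPolynomial.X i' + MvPolynomial.X j' : MvPolynomial (Fin m) ℤ) ^ 2 ^ n) /
              2)) ∧
        ((i, j) ≠ (i', j') →
          Even (MvPolynomial.coeff (Finsupp.single i 1 + Finsupp.single j 1)
                ((MvPolynomial.X i' + MvPolynomial.X j' : MvPolynomial (Fin m) ℤ) ^ 2 ^ n) /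
              2 ^ n +
            MvPolynomial.coeff
                (Finsupp.single i (2 ^ (n - 1)) + Finsupp.single j (2 ^ (n - 1)))
                ((MvPolynomial.X i' + MvPolynomial.X j' : MvPolynomial (Fin m) ℤ) ^ 2 ^ n) /
              2))) := by
  intro i j hij
  have hne : i ≠ j := ne_of_lt hij
  have hne' : i' ≠ j' := ne_of_lt hij'
  have hsub : 2 ^ n - 2 ^ (n - 1) = 2 ^ (n - 1) := by
    have : 2 ^ n = 2 ^ (n - 1) * 2 := by
      rw [← pow_succ]; congr 1; omega
    omega
  -- first coefficient is always 0, by homogeneity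
  have hhom : ((MvPolynomial.X i' + MvPolynomial.X j' : MvPolynomial (Fin m) ℤ) ^ 2 ^ n).IsHomogeneous (2 ^ n) := by
    have h1 : (MvPolynomial.X i' + MvPolynomial.X j' : MvPolynomial (Fin m) ℤ).IsHomogeneous 1 :=
      (MvPolynomial.isHomogeneous_X _ _).add (MvPolynomial.isHomogeneous_X _ _)
    simpa using h1.pow (2 ^ n)
  have hc1 : MvPolynomial.coeff (Finsupp.single i 1 + Finsupp.single j 1)
      ((MvPolynomial.X i' + MvPolynomial.X j' : MvPolynomial (Fin m) ℤ) ^ 2 ^ n) = 0 := by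
    apply hhom.coeff_eq_zero
    have : (Finsupp.single i 1 + Finsupp.single j 1).degree = 2 := by
      rw [show (Finsupp.degree : (Fin m →₀ ℕ) → ℕ) = ⇑(Finsupp.weight 1) from
        congrArg DFunLike.coe Finsupp.degree_eq_weight_one, map_add]
      simp [Finsupp.weight_apply, Finsupp.sum_single_index]
    rw [this]
    have : 4 ≤ 2 ^ n := by
      calc (4:ℕ) = 2 ^ 2 := by norm_num
      _ ≤ 2 ^ n := Nat.pow_le_pow_right (by norm_num) hn
    omega
  constructor
  · -- the case (i,j) = (i',j')
    intro h
    injection h with h1 h2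
    subst h1; subst h2
    have hc2 : MvPolynomial.coeff
        (Finsupp.single i (2 ^ (n - 1)) + Finsupp.single j (2 ^ (n - 1)))
        ((MvPolynomial.X i + MvPolynomial.X j : MvPolynomial (Fin m) ℤ) ^ 2 ^ n)
        = ((2 ^ n).choose (2 ^ (n - 1)) : ℤ) := by
      rw [expand_coeff']
      have : ∀ k ∈ Finset.range (2 ^ n + 1),
          (if (Finsupp.single i (2 ^ (n - 1)) + Finsupp.single j (2 ^ (n - 1)))
              = Finsupp.single i k + Finsupp.single j (2 ^ n - k)
            then ((2 ^ n).choose k : ℤ) else 0)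
          = if k = 2 ^ (n - 1) then ((2 ^ n).choose k : ℤ) else 0 := by
        intro k hk
        by_cases hkk : k = 2 ^ (n - 1)
        · subst hkk
          rw [hsub, if_pos rfl, if_pos rfl]
        · rw [if_neg hkk, if_neg]
          intro heq
          have := DFunLike.congr_fun heq i
          simp [Finsupp.single_apply, hne, Ne.symm hne] at this
          exact hkk this.symm
      rw [Finset.sum_congr rfl this, Finset.sum_ite_eq' (Finset.range (2 ^ n + 1))]
      rw [if_pos]
      rw [Finset.mem_range]
      have : 2 ^ (n - 1) ≤ 2 ^ n := Nat.pow_le_pow_right (by norm_num) (Nat.sub_le n 1)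
      omega
    rw [hc1, hc2]
    have h0 : (0:ℤ) / 2 ^ n = 0 := Int.zero_ediv _
    rw [h0, zero_add]
    have := odd_central' n (by omega)
    have hcast : ((2 ^ n).choose (2 ^ (n - 1)) : ℤ) / 2 = (((2 ^ n).choose (2 ^ (n - 1)) / 2 : ℕ) : ℤ) := by
      norm_cast
    rw [hcast]
    exact_mod_cast this
  · -- the case (i,j) ≠ (i',j')
    intro h
    have hc2 : MvPolynomial.coeff
        (Finsupp.single i (2 ^ (n - 1)) + Finsupp.single j (2 ^ (n - 1)))
        ((MvPolynomial.X i' + MvPolynomial.X j' : MvPolynomial (Fin m) ℤ) ^ 2 ^ n) = 0 := by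
      rw [expand_coeff']
      apply Finset.sum_eq_zero
      intro k hk
      rw [if_neg]
      intro heq
      -- find an index where the two sides differ
      have key : (i ≠ i' ∧ i ≠ j') ∨ (j ≠ i' ∧ j ≠ j') := by
        by_cases h1 : i = i'
        · subst h1
          have hjj : j ≠ j' := by
            intro hj; exact h (by rw [hj])
          exact Or.inr ⟨ne_of_gt hij, hjj⟩
        · by_cases h2 : i = j'
          · subst h2
            refine Or.inr ⟨?_, ne_of_gt hij⟩
            exact ne_of_gt (lt_trans hij' hij)
          · exact Or.inl ⟨h1, h2⟩
      have hpow0 : 2 ^ (n - 1) ≠ 0 := by positivity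
      rcases key with ⟨ha, hb⟩ | ⟨ha, hb⟩
      · have := DFunLike.congr_fun heq i
        simp [Finsupp.single_apply, hne, Ne.symm ha, Ne.symm hb, hpow0] at this
      · have := DFunLike.congr_fun heq j
        simp [Finsupp.single_apply, Ne.symm hne, Ne.symm ha, Ne.symm hb, hpow0] at this
    rw [hc1, hc2]
    simp
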